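/- (Appendix theorem: Accountable Safety with Acknowledgments.) Call a validator v FFG-ack-compliant w.r.t. a set V of FFG-votes and a set A of acks if its votes in V are given by a slot-indexed partial family (S_t, T_t) with T_t.c = t whenever defined and monotone sources (S_t ≤ S_{t′} whenever t ≤ t′ are both in the domain), and its acks in A are given by a slot-indexed partial family C_t with C_t.c = t whenever defined and C_t ≤ S_{t′} for every defined ack slot t and every defined vote slot t′ > t. Let V be a set of FFG-votes and A a set of acks among n validators, V₁, V₂ ⊆ V and A₁, A₂ ⊆ A. If checkpoints 𝒞₁ finalized-with-acks w.r.t. (V₁, A₁) and 𝒞₂ finalized-with-acks w.r.t. (V₂, A₂) have conflicting chains, then there exists a set W of validators with 3·|W| ≥ n such that every v ∈ W violates E1 or E2 w.r.t. V₁ ∪ V₂ or E3 w.r.t. (V₁ ∪ V₂, A₁ ∪ A₂); moreover, no validator that is FFG-ack-compliant w.r.t. (V, A) violates E1, E2, or E3 w.r.t. (V, A), so W contains no FFG-ack-compliant validator. -/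

import Mathlib

structure Block (β : Type) where
  body : β
  p : ℤ

def genesisBlock {β : Type} (g : β) : Block β := ⟨g, -1⟩

structure Chain (β : Type) (g : β) where
  blocks : List (Block β)
  ne : blocks ≠ []
  head_genesis : blocks.head? = some (genesisBlock g)
  strict : List.Chain' (fun a b => a.p < b.p) blocks

namespace Chain

variable {β : Type} {g : β}

/-- The height of a chain: the slot of its last block. -/
def height (χ : Chain β g) : ℤ := (χ.blocks.getLast χ.ne).p

/-- `χ₁ ⪯ χ₂`: `χ₁` is a prefix of `χ₂`. -/
def IsPrefix (χ₁ χ₂ : Chain β g) : Prop := χ₁.blocks <+: χ₂.blocks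

/-- Two chains conflict if neither is a prefix of the other. -/
def Conflicts (χ₁ χ₂ : Chain β g) : Prop := ¬ χ₁.IsPrefix χ₂ ∧ ¬ χ₂.IsPrefix χ₁

end Chain

def genesisChain {β : Type} (g : β) : Chain β g where
  blocks := [genesisBlock g]
  ne := by simp
  head_genesis := rfl
  strict := List.isChain_singleton _

structure Checkpoint (β : Type) (g : β) where
  chain : Chain β g
  c : ℕ
  height_le : chain.height ≤ (c : ℤ)

def genesisCheckpoint {β : Type} (g : β) : Checkpoint β g where
  chain := genesisChain g
  c := 0
  height_le := by simp [Chain.height, genesisChain, genesisBlock]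

namespace Checkpoint

variable {β : Type} {g : β}

/-- Lexicographic order on checkpoints: `𝒞 ≤ 𝒞′`. -/
def le (C C' : Checkpoint β g) : Prop :=
  C.c < C'.c ∨ (C.c = C'.c ∧ C.chain.height ≤ C'.chain.height)

/-- Strict lexicographic order on checkpoints: `𝒞 < 𝒞′`. -/
def lt (C C' : Checkpoint β g) : Prop :=
  C.c < C'.c ∨ (C.c = C'.c ∧ C.chain.height < C'.chain.height)

end Checkpoint

structure FFGVote (n : ℕ) (β : Type) (g : β) where
  source : Checkpoint β g
  target : Checkpoint β g
  sender : Fin n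

def FFGVote.Valid {n : ℕ} {β : Type} {g : β} (m : FFGVote n β g) : Prop :=
  m.source.chain.IsPrefix m.target.chain ∧ m.source.c < m.target.c

/-- The set of senders of a set of votes. -/
def senders {n : ℕ} {β : Type} {g : β} (M : Set (FFGVote n β g)) : Set (Fin n) :=
  {v | ∃ m ∈ M, m.sender = v}

/-- A checkpoint is justified w.r.t. a set of votes `V`. -/
inductive Justified {n : ℕ} {β : Type} {g : β} (V : Set (FFGVote n β g)) :
    Checkpoint β g → Prop
  | genesis : Justified V (genesisCheckpoint g)
  | step (C : Checkpoint β g) (M : Set (FFGVote n β g))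
      (hMV : M ⊆ V)
      (hcard : 2 * n ≤ 3 * (senders M).ncard)
      (hjust : ∀ m ∈ M, Justified V m.source)
      (hvotes : ∀ m ∈ M, m.Valid ∧
        m.source.chain.IsPrefix C.chain ∧ C.chain.IsPrefix m.target.chain ∧
        m.target.c = C.c) :
      Justified V C

/-- A checkpoint is finalized w.r.t. a set of votes `V`. -/
def Finalized {n : ℕ} {β : Type} {g : β} (V : Set (FFGVote n β g))
    (C : Checkpoint β g) : Prop :=
  C = genesisCheckpoint g ∨
    (Justified V C ∧ ∃ M ⊆ V, 2 * n ≤ 3 * (senders M).ncard ∧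
      ∀ m ∈ M, m.Valid ∧ m.source = C ∧ m.target.c = C.c + 1)

/-- E1 (double voting). -/
def ViolatesE1 {n : ℕ} {β : Type} {g : β} (V : Set (FFGVote n β g)) (v : Fin n) : Prop :=
  ∃ m₁ ∈ V, ∃ m₂ ∈ V, m₁.sender = v ∧ m₂.sender = v ∧ m₁ ≠ m₂ ∧
    m₁.target.c = m₂.target.c

/-- E2 (surround voting). -/
def ViolatesE2 {n : ℕ} {β : Type} {g : β} (V : Set (FFGVote n β g)) (v : Fin n) : Prop :=
  ∃ m₁ ∈ V, ∃ m₂ ∈ V, m₁.sender = v ∧ m₂.sender = v ∧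
    m₂.source.lt m₁.source ∧ m₁.target.c < m₂.target.c

structure Ack (n : ℕ) (β : Type) (g : β) where
  cp : Checkpoint β g
  sender : Fin n

/-- E3 (ack surround). -/
def ViolatesE3 {n : ℕ} {β : Type} {g : β} (V : Set (FFGVote n β g))
    (A : Set (Ack n β g)) (v : Fin n) : Prop :=
  ∃ m ∈ V, ∃ a ∈ A, m.sender = v ∧ a.sender = v ∧
    m.source.lt a.cp ∧ a.cp.c < m.target.c

/-- Finalized with acknowledgments. -/
def FinalizedWithAcks {n : ℕ} {β : Type} {g : β} (V : Set (FFGVote n β g))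
    (A : Set (Ack n β g)) (C : Checkpoint β g) : Prop :=
  Finalized V C ∨
    (Justified V C ∧ 2 * n ≤ 3 * (Set.ncard {v : Fin n | (⟨C, v⟩ : Ack n β g) ∈ A}))

/-- A validator whose votes in `V` and acks in `A` come from slot-indexed
families satisfying the honest-protocol constraints. -/
def FFGAckCompliant {n : ℕ} {β : Type} {g : β} (V : Set (FFGVote n β g))
    (A : Set (Ack n β g)) (v : Fin n) : Prop :=
  ∃ (f : ℕ → Option (Checkpoint β g × Checkpoint β g))
    (a : ℕ → Option (Checkpoint β g)),
    ({m ∈ V | m.sender = v} =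
      {m : FFGVote n β g | ∃ t S T, f t = some (S, T) ∧ m = ⟨S, T, v⟩}) ∧
    (∀ t S T, f t = some (S, T) → T.c = t) ∧
    (∀ t t' S T S' T', t ≤ t' → f t = some (S, T) → f t' = some (S', T') → S.le S') ∧
    ({ack ∈ A | ack.sender = v} =
      {ack : Ack n β g | ∃ t C, a t = some C ∧ ack = ⟨C, v⟩}) ∧
    (∀ t C, a t = some C → C.c = t) ∧
    (∀ t t' C S T, a t = some C → t < t' → f t' = some (S, T) → C.le S)

section Aux

variable {n : ℕ} {β : Type} {g : β}

lemma MyChain.ext {χ₁ χ₂ : Chain β g} (h : χ₁.blocks = χ₂.blocks) : χ₁ = χ₂ := by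
  cases χ₁; cases χ₂; simp_all

lemma MyCheckpoint.ext {C₁ C₂ : Checkpoint β g} (h : C₁.chain = C₂.chain)
    (hc : C₁.c = C₂.c) : C₁ = C₂ := by
  cases C₁; cases C₂; simp_all

lemma genesis_isPrefix (χ : Chain β g) : (genesisChain g).IsPrefix χ := by
  have h := χ.head_genesis
  rcases hb : χ.blocks with _ | ⟨b, l⟩
  · exact absurd hb χ.ne
  · rw [hb] at h
    simp only [List.head?_cons, Option.some_inj] at h
    subst h
    show (genesisChain g).blocks <+: χ.blocks
    rw [hb]
    exact ⟨l, rfl⟩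

lemma height_lt_of_proper {χ₁ χ₂ : Chain β g} (h : χ₁.IsPrefix χ₂)
    (hne : χ₁.blocks ≠ χ₂.blocks) : χ₁.height < χ₂.height := by
  obtain ⟨t, ht⟩ := h
  have htne : t ≠ [] := by rintro rfl; simp at ht; exact hne ht
  haveI : IsTrans (Block β) (fun a b => a.p < b.p) := ⟨fun a b c => lt_trans⟩
  have hpw : List.Pairwise (fun (a b : Block β) => a.p < b.p) χ₂.blocks :=
    List.isChain_iff_pairwise.mp χ₂.strict
  rw [← ht] at hpw
  obtain ⟨_, _, hrel⟩ := List.pairwise_append.mp hpw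
  have key : (χ₁.blocks.getLast χ₁.ne).p < (t.getLast htne).p :=
    hrel _ (List.getLast_mem _) _ (List.getLast_mem _)
  have hlast : χ₂.blocks.getLast χ₂.ne = t.getLast htne := by
    have : χ₂.blocks.getLast χ₂.ne = (χ₁.blocks ++ t).getLast (by simp [htne]) := by
      congr 1; exact ht.symm
    rw [this, List.getLast_append]
    simp [htne]
  unfold Chain.height
  rw [hlast]
  exact key

lemma height_le_of_prefix {χ₁ χ₂ : Chain β g} (h : χ₁.IsPrefix χ₂) :
    χ₁.height ≤ χ₂.height := by
  by_cases he : χ₁.blocks = χ₂.blocks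
  · rw [MyChain.ext he]
  · exact le_of_lt (height_lt_of_proper h he)

lemma eq_of_prefix_height_le {χ₁ χ₂ : Chain β g} (h : χ₁.IsPrefix χ₂)
    (hh : χ₂.height ≤ χ₁.height) : χ₁ = χ₂ := by
  by_cases he : χ₁.blocks = χ₂.blocks
  · exact MyChain.ext he
  · exact absurd (height_lt_of_proper h he) (not_lt.mpr hh)

lemma not_le_and_lt {a b : Checkpoint β g} (h1 : a.le b) (h2 : b.lt a) : False := by
  rcases h1 with h | ⟨h, h'⟩ <;> rcases h2 with k | ⟨k, k'⟩ <;> omega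

lemma lt_irrefl' (a : Checkpoint β g) : ¬ a.lt a := by
  rintro (h | ⟨h, h'⟩) <;> omega

lemma inter_card {S T : Set (Fin n)} (hS : 2 * n ≤ 3 * S.ncard)
    (hT : 2 * n ≤ 3 * T.ncard) : n ≤ 3 * (S ∩ T).ncard := by
  have h1 := Set.ncard_inter_add_ncard_union S T (Set.toFinite S) (Set.toFinite T)
  have h2 : (S ∪ T).ncard ≤ n := by
    have := Set.ncard_le_ncard (Set.subset_univ (S ∪ T)) (Set.toFinite _)
    rwa [Set.ncard_univ, Nat.card_eq_fintype_card, Fintype.card_fin] at this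
  omega

/-- The "bad set exists" conclusion. -/
def Bad (V' : Set (FFGVote n β g)) (A' : Set (Ack n β g)) : Prop :=
  ∃ W : Set (Fin n), n ≤ 3 * W.ncard ∧
    ∀ v ∈ W, ViolatesE1 V' v ∨ ViolatesE2 V' v ∨ ViolatesE3 V' A' v

lemma not_genesis_of_conflicts {X : Checkpoint β g} {χ : Chain β g}
    (hconf : X.chain.Conflicts χ) : X ≠ genesisCheckpoint g := by
  rintro rfl
  exact hconf.1 (genesis_isPrefix χ)

lemma bad_of_same_slot (Va Vb : Set (FFGVote n β g)) (A' : Set (Ack n β g))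
    {X Y : Checkpoint β g} (hX : Justified Va X) (hY : Justified Vb Y)
    (hc : X.c = Y.c) (hconf : X.chain.Conflicts Y.chain) : Bad (Va ∪ Vb) A' := by
  cases hX with
  | genesis => exact absurd rfl (not_genesis_of_conflicts hconf)
  | step X M₁ hMV₁ hcard₁ hjust₁ hvotes₁ =>
    cases hY with
    | genesis => exact absurd rfl (not_genesis_of_conflicts ⟨hconf.2, hconf.1⟩)
    | step Y M₂ hMV₂ hcard₂ hjust₂ hvotes₂ =>
      refine ⟨senders M₁ ∩ senders M₂, inter_card hcard₁ hcard₂, ?_⟩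
      rintro v ⟨⟨m₁, hm₁, hs₁⟩, ⟨m₂, hm₂, hs₂⟩⟩
      left
      refine ⟨m₁, Or.inl (hMV₁ hm₁), m₂, Or.inr (hMV₂ hm₂), hs₁, hs₂, ?_, ?_⟩
      · rintro rfl
        obtain ⟨-, -, hp₁, -⟩ := hvotes₁ m₁ hm₁
        obtain ⟨-, -, hp₂, -⟩ := hvotes₂ m₁ hm₂
        rcases List.prefix_or_prefix_of_prefix hp₁ hp₂ with h | h
        · exact hconf.1 h
        · exact hconf.2 h
      · rw [(hvotes₁ m₁ hm₁).2.2.2, (hvotes₂ m₂ hm₂).2.2.2, hc]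

lemma bad_of_cert (Va Vb : Set (FFGVote n β g)) (Aa A' : Set (Ack n β g))
    {C₁ C₂ : Checkpoint β g}
    (hJ1 : Justified Va C₁)
    (hcert : (∃ Q ⊆ Va, 2 * n ≤ 3 * (senders Q).ncard ∧
        ∀ q ∈ Q, q.Valid ∧ q.source = C₁ ∧ q.target.c = C₁.c + 1)
      ∨ 2 * n ≤ 3 * (Set.ncard {v : Fin n | (⟨C₁, v⟩ : Ack n β g) ∈ Aa}))
    (hconf : C₁.chain.Conflicts C₂.chain)
    (hAsub : Aa ⊆ A')
    {D : Checkpoint β g} (hD : Justified Vb D) :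
    D.chain.IsPrefix C₂.chain → C₁.c < D.c → Bad (Va ∪ Vb) A' := by
  induction hD with
  | genesis => intro _ h; simp [genesisCheckpoint] at h
  | step D M hMV hcard hjust hvotes ih =>
    intro hpre hgt
    by_cases hhigh : ∃ m ∈ M, C₁.c < m.source.c
    · obtain ⟨m, hm, hms⟩ := hhigh
      exact ih m hm (List.IsPrefix.trans (hvotes m hm).2.1 hpre) hms
    · push_neg at hhigh
      by_cases hlt : ∃ m ∈ M, ¬ m.source.lt C₁
      · -- derive Bad from a same-slot conflict (or contradiction)
        obtain ⟨m, hm, hmlt⟩ := hlt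
        have hc : m.source.c = C₁.c := by
          rcases lt_or_eq_of_le (hhigh m hm) with h | h
          · exact absurd (Or.inl h) hmlt
          · exact h
        have hsC₂ : m.source.chain.IsPrefix C₂.chain :=
          List.IsPrefix.trans (hvotes m hm).2.1 hpre
        by_cases hcc : m.source.chain.Conflicts C₁.chain
        · exact bad_of_same_slot Va Vb A' hJ1 (hjust m hm) hc.symm ⟨hcc.2, hcc.1⟩
        · exfalso
          have hcomp : m.source.chain.IsPrefix C₁.chain ∨
              C₁.chain.IsPrefix m.source.chain := by
            by_contra hx
            push_neg at hx
            exact hcc ⟨hx.1, hx.2⟩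
          rcases hcomp with hp' | hp
          · have hhle : C₁.chain.height ≤ m.source.chain.height := by
              by_contra hlt2
              exact hmlt (Or.inr ⟨hc, not_le.mp hlt2⟩)
            have hce := eq_of_prefix_height_le hp' hhle
            have heq : m.source = C₁ := MyCheckpoint.ext hce hc
            exact hconf.1 (heq ▸ hsC₂)
          · exact hconf.1 (List.IsPrefix.trans hp hsC₂)
      · push_neg at hlt
        rcases hcert with ⟨Q, hQV, hQcard, hQ⟩ | hack
        · refine ⟨senders M ∩ senders Q, inter_card hcard hQcard, ?_⟩
          rintro v ⟨⟨m, hm, hs⟩, ⟨q, hq, hqs⟩⟩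
          have hmt : m.target.c = D.c := (hvotes m hm).2.2.2
          have hqt : q.target.c = C₁.c + 1 := (hQ q hq).2.2
          have hqsrc : q.source = C₁ := (hQ q hq).2.1
          rcases Nat.lt_or_ge (C₁.c + 1) D.c with hgt2 | hle2
          · -- E2
            right; left
            exact ⟨q, Or.inl (hQV hq), m, Or.inr (hMV hm), hqs, hs,
              hqsrc ▸ hlt m hm, by omega⟩
          · -- D.c = C₁.c + 1 : E1
            have hDc : D.c = C₁.c + 1 := by omega
            left
            refine ⟨m, Or.inr (hMV hm), q, Or.inl (hQV hq), hs, hqs, ?_, by omega⟩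
            rintro rfl
            exact lt_irrefl' C₁ (hqsrc ▸ hlt m hm)
        · refine ⟨senders M ∩ {v : Fin n | (⟨C₁, v⟩ : Ack n β g) ∈ Aa},
            inter_card hcard hack, ?_⟩
          rintro v ⟨⟨m, hm, hs⟩, ha⟩
          right; right
          exact ⟨m, Or.inr (hMV hm), ⟨C₁, v⟩, hAsub ha, hs, rfl, hlt m hm,
            by rw [(hvotes m hm).2.2.2]; exact hgt⟩

lemma cert_of_fwa {Va : Set (FFGVote n β g)} {Aa : Set (Ack n β g)}
    {X : Checkpoint β g} (h : FinalizedWithAcks Va Aa X)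
    (hng : X ≠ genesisCheckpoint g) :
    Justified Va X ∧
    ((∃ Q ⊆ Va, 2 * n ≤ 3 * (senders Q).ncard ∧
        ∀ q ∈ Q, q.Valid ∧ q.source = X ∧ q.target.c = X.c + 1)
      ∨ 2 * n ≤ 3 * (Set.ncard {v : Fin n | (⟨X, v⟩ : Ack n β g) ∈ Aa})) := by
  rcases h with (h | ⟨hJ, hM⟩) | ⟨hJ, hack⟩
  · exact absurd h hng
  · exact ⟨hJ, Or.inl hM⟩
  · exact ⟨hJ, Or.inr hack⟩

-- Monotonicity of violations
lemma e1_mono {V' V'' : Set (FFGVote n β g)} (h : V' ⊆ V'') {v : Fin n}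
    (hv : ViolatesE1 V' v) : ViolatesE1 V'' v := by
  obtain ⟨m₁, h₁, m₂, h₂, rest⟩ := hv
  exact ⟨m₁, h h₁, m₂, h h₂, rest⟩

lemma e2_mono {V' V'' : Set (FFGVote n β g)} (h : V' ⊆ V'') {v : Fin n}
    (hv : ViolatesE2 V' v) : ViolatesE2 V'' v := by
  obtain ⟨m₁, h₁, m₂, h₂, rest⟩ := hv
  exact ⟨m₁, h h₁, m₂, h h₂, rest⟩

lemma e3_mono {V' V'' : Set (FFGVote n β g)} {A' A'' : Set (Ack n β g)}
    (h : V' ⊆ V'') (hA : A' ⊆ A'') {v : Fin n}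
    (hv : ViolatesE3 V' A' v) : ViolatesE3 V'' A'' v := by
  obtain ⟨m, h₁, a, h₂, rest⟩ := hv
  exact ⟨m, h h₁, a, hA h₂, rest⟩

lemma compliant_ok (V : Set (FFGVote n β g)) (A : Set (Ack n β g)) (v : Fin n)
    (h : FFGAckCompliant V A v) :
    ¬ (ViolatesE1 V v ∨ ViolatesE2 V v ∨ ViolatesE3 V A v) := by
  obtain ⟨f, a, hV, hTc, hmono, hA, hac, hale⟩ := h
  have voteOf : ∀ m ∈ V, m.sender = v →
      ∃ S T, f m.target.c = some (S, T) ∧ m = ⟨S, T, v⟩ := by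
    intro m hm hs
    have : m ∈ {m ∈ V | m.sender = v} := ⟨hm, hs⟩
    rw [hV] at this
    obtain ⟨t, S, T, hft, hmeq⟩ := this
    have : m.target = T := by rw [hmeq]
    have htc : T.c = t := hTc t S T hft
    refine ⟨S, T, ?_, hmeq⟩
    rw [this, htc]; exact hft
  rintro (⟨m₁, h₁, m₂, h₂, hs₁, hs₂, hne, htc⟩ |
          ⟨m₁, h₁, m₂, h₂, hs₁, hs₂, hlt, htlt⟩ |
          ⟨m, hm, ak, hak, hs, has, hlt, hclt⟩)
  · obtain ⟨S₁, T₁, hf₁, he₁⟩ := voteOf m₁ h₁ hs₁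
    obtain ⟨S₂, T₂, hf₂, he₂⟩ := voteOf m₂ h₂ hs₂
    rw [htc] at hf₁
    rw [hf₁] at hf₂
    simp only [Option.some_inj, Prod.mk.injEq] at hf₂
    exact hne (by rw [he₁, he₂, hf₂.1, hf₂.2])
  · obtain ⟨S₁, T₁, hf₁, he₁⟩ := voteOf m₁ h₁ hs₁
    obtain ⟨S₂, T₂, hf₂, he₂⟩ := voteOf m₂ h₂ hs₂
    have hle := hmono _ _ _ _ _ _ (le_of_lt htlt) hf₁ hf₂
    have hs1 : m₁.source = S₁ := by rw [he₁]
    have hs2 : m₂.source = S₂ := by rw [he₂]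
    rw [hs1, hs2] at hlt
    exact not_le_and_lt hle hlt
  · obtain ⟨S, T, hf, he⟩ := voteOf m hm hs
    have : ak ∈ {ack ∈ A | ack.sender = v} := ⟨hak, has⟩
    rw [hA] at this
    obtain ⟨t, C, hat, hakeq⟩ := this
    have hcp : ak.cp = C := by rw [hakeq]
    have hct : C.c = t := hac t C hat
    have ht : t = ak.cp.c := by rw [hcp, hct]
    have hle := hale t m.target.c C S T hat (ht ▸ hclt) hf
    have hlt2 : S.lt C := by
      have h1 : m.source = S := by rw [he]
      rw [h1, hcp] at hlt
      exact hlt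
    exact not_le_and_lt hle hlt2

end Aux

/-- Accountable Safety with Acknowledgments. -/
theorem accountable_safety_with_acks_n_over_three
    {n : ℕ} {β : Type} {g : β} (V : Set (FFGVote n β g)) (A : Set (Ack n β g))
    (V₁ V₂ : Set (FFGVote n β g)) (A₁ A₂ : Set (Ack n β g))
    (hV₁ : V₁ ⊆ V) (hV₂ : V₂ ⊆ V) (hA₁ : A₁ ⊆ A) (hA₂ : A₂ ⊆ A)
    (C₁ C₂ : Checkpoint β g)
    (h₁ : FinalizedWithAcks V₁ A₁ C₁) (h₂ : FinalizedWithAcks V₂ A₂ C₂)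
    (hconf : C₁.chain.Conflicts C₂.chain) :
    (∃ W : Set (Fin n), n ≤ 3 * W.ncard ∧
      (∀ v ∈ W, ViolatesE1 (V₁ ∪ V₂) v ∨ ViolatesE2 (V₁ ∪ V₂) v ∨
        ViolatesE3 (V₁ ∪ V₂) (A₁ ∪ A₂) v) ∧
      (∀ v ∈ W, ¬ FFGAckCompliant V A v)) ∧
    (∀ v : Fin n, FFGAckCompliant V A v →
      ¬ (ViolatesE1 V v ∨ ViolatesE2 V v ∨ ViolatesE3 V A v)) := by

  have part2 : ∀ v : Fin n, FFGAckCompliant V A v →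
      ¬ (ViolatesE1 V v ∨ ViolatesE2 V v ∨ ViolatesE3 V A v) :=
    fun v h => compliant_ok V A v h
  have hng₁ : C₁ ≠ genesisCheckpoint g := not_genesis_of_conflicts hconf
  have hng₂ : C₂ ≠ genesisCheckpoint g := not_genesis_of_conflicts ⟨hconf.2, hconf.1⟩
  obtain ⟨hJ₁, hc₁⟩ := cert_of_fwa h₁ hng₁
  obtain ⟨hJ₂, hc₂⟩ := cert_of_fwa h₂ hng₂
  have hbad : Bad (V₁ ∪ V₂) (A₁ ∪ A₂) := by
    rcases lt_trichotomy C₁.c C₂.c with h | h | h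
    · exact bad_of_cert V₁ V₂ A₁ (A₁ ∪ A₂) hJ₁ hc₁ hconf Set.subset_union_left
        hJ₂ List.prefix_rfl h
    · exact bad_of_same_slot V₁ V₂ (A₁ ∪ A₂) hJ₁ hJ₂ h hconf
    · have := bad_of_cert V₂ V₁ A₂ (A₁ ∪ A₂) hJ₂ hc₂ ⟨hconf.2, hconf.1⟩
        Set.subset_union_right hJ₁ List.prefix_rfl h
      rwa [Set.union_comm] at this
  obtain ⟨W, hWcard, hWviol⟩ := hbad
  refine ⟨⟨W, hWcard, hWviol, ?_⟩, part2⟩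
  intro v hv hcomp
  have hok := part2 v hcomp
  rcases hWviol v hv with h' | h' | h'
  · exact hok (Or.inl (e1_mono (Set.union_subset hV₁ hV₂) h'))
  · exact hok (Or.inr (Or.inl (e2_mono (Set.union_subset hV₁ hV₂) h')))
  · exact hok (Or.inr (Or.inr (e3_mono (Set.union_subset hV₁ hV₂)
      (Set.union_subset hA₁ hA₂) h')))
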